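/- The complete graph K_n on n vertices has distinguishing index D'(K_n) = 2 for all n ≥ 6. -/
import Mathlib

/-- The "red" relation: a Hamiltonian path `0 - 1 - ⋯ - (n-1)` together with the chord `{1,3}`.
For `n ≥ 6` this graph is asymmetric. -/
def Rrel (n : ℕ) (u v : Fin n) : Prop :=
  u.1 + 1 = v.1 ∨ v.1 + 1 = u.1 ∨ (u.1 = 1 ∧ v.1 = 3) ∨ (u.1 = 3 ∧ v.1 = 1)

instance (n : ℕ) (u v : Fin n) : Decidable (Rrel n u v) := by
  unfold Rrel; infer_instance

lemma Rrel_symm (n : ℕ) (u v : Fin n) : Rrel n u v ↔ Rrel n v u := by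
  unfold Rrel; tauto

lemma Rrel_irrefl (n : ℕ) (w : Fin n) : ¬ Rrel n w w := by
  unfold Rrel; omega

/-- The complete graph `K_n` has distinguishing index exactly `2` for all `n ≥ 6`:
there is a distinguishing edge-colouring with `2` colours, but none with `1` colour. -/
theorem distinguishing_index_complete_graph (n : ℕ) (hn : 6 ≤ n) :
    (∃ c : (⊤ : SimpleGraph (Fin n)).edgeSet → Fin 2,
      ∀ γ : (⊤ : SimpleGraph (Fin n)) ≃g (⊤ : SimpleGraph (Fin n)),
        (∀ e, c (γ.mapEdgeSet e) = c e) → ∀ v, γ v = v) ∧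
    ¬ (∃ c : (⊤ : SimpleGraph (Fin n)).edgeSet → Fin 1,
      ∀ γ : (⊤ : SimpleGraph (Fin n)) ≃g (⊤ : SimpleGraph (Fin n)),
        (∀ e, c (γ.mapEdgeSet e) = c e) → ∀ v, γ v = v) := by
  constructor
  · -- a distinguishing 2-colouring
    refine ⟨fun e => Sym2.lift ⟨fun u v => if Rrel n u v then 0 else 1, ?_⟩ e.1, ?_⟩
    · intro u v
      simp only [if_congr (Rrel_symm n u v) rfl rfl]
    · intro γ hc
      -- extract the relation-preservation property
      have hR : ∀ u v : Fin n, u ≠ v → (Rrel n (γ u) (γ v) ↔ Rrel n u v) := by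
        intro u v huv
        have he : s(u, v) ∈ (⊤ : SimpleGraph (Fin n)).edgeSet := by
          simpa using huv
        have h := hc ⟨s(u, v), he⟩
        have hmap : ((γ.mapEdgeSet ⟨s(u, v), he⟩ : (⊤ : SimpleGraph (Fin n)).edgeSet) : Sym2 (Fin n))
            = s(γ u, γ v) := rfl
        dsimp only at h
        rw [hmap] at h
        simp only [Sym2.lift_mk] at h
        by_cases h1 : Rrel n (γ u) (γ v) <;> by_cases h2 : Rrel n u v <;>
          simp [h1, h2] at h ⊢
      have hinj : Function.Injective (γ : Fin n → Fin n) := γ.toEquiv.injective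
      -- named vertices
      let v0 : Fin n := ⟨0, by omega⟩
      let v1 : Fin n := ⟨1, by omega⟩
      let v2 : Fin n := ⟨2, by omega⟩
      let v3 : Fin n := ⟨3, by omega⟩
      let v4 : Fin n := ⟨4, by omega⟩
      let vl : Fin n := ⟨n - 1, by omega⟩
      have hv0 : v0.1 = 0 := rfl
      have hv1 : v1.1 = 1 := rfl
      have hv2 : v2.1 = 2 := rfl
      have hv3 : v3.1 = 3 := rfl
      have hv4 : v4.1 = 4 := rfl
      have hvl : vl.1 = n - 1 := rfl
      -- degree ≥ 3 forces value in {1,3}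
      have hT : ∀ v : Fin n, (∃ a b c : Fin n, a ≠ b ∧ a ≠ c ∧ b ≠ c ∧
          Rrel n a v ∧ Rrel n b v ∧ Rrel n c v) → (v.1 = 1 ∨ v.1 = 3) := by
        rintro v ⟨a, b, c, hab, hac, hbc, ha, hb, hc⟩
        have hab' : a.1 ≠ b.1 := fun h => hab (Fin.ext h)
        have hac' : a.1 ≠ c.1 := fun h => hac (Fin.ext h)
        have hbc' : b.1 ≠ c.1 := fun h => hbc (Fin.ext h)
        unfold Rrel at ha hb hc
        omega
      -- γ maps {1,3} into {1,3}
      have hπ1 : (γ v1).1 = 1 ∨ (γ v1).1 = 3 := by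
        apply hT
        refine ⟨γ v0, γ v2, γ v3, hinj.ne (by simp [v0, v2, Fin.ext_iff]),
          hinj.ne (by simp [v0, v3, Fin.ext_iff]), hinj.ne (by simp [v2, v3, Fin.ext_iff]),
          ?_, ?_, ?_⟩
        · exact (hR v0 v1 (by simp [v0, v1, Fin.ext_iff])).2 (Or.inl rfl)
        · exact (hR v2 v1 (by simp [v2, v1, Fin.ext_iff])).2 (Or.inr (Or.inl rfl))
        · exact (hR v3 v1 (by simp [v3, v1, Fin.ext_iff])).2 (Or.inr (Or.inr (Or.inr ⟨rfl, rfl⟩)))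
      have hπ3 : (γ v3).1 = 1 ∨ (γ v3).1 = 3 := by
        apply hT
        refine ⟨γ v1, γ v2, γ v4, hinj.ne (by simp [v1, v2, Fin.ext_iff]),
          hinj.ne (by simp [v1, v4, Fin.ext_iff]), hinj.ne (by simp [v2, v4, Fin.ext_iff]),
          ?_, ?_, ?_⟩
        · exact (hR v1 v3 (by simp [v1, v3, Fin.ext_iff])).2 (Or.inr (Or.inr (Or.inl ⟨rfl, rfl⟩)))
        · exact (hR v2 v3 (by simp [v2, v3, Fin.ext_iff])).2 (Or.inl rfl)
        · exact (hR v4 v3 (by simp [v4, v3, Fin.ext_iff])).2 (Or.inr (Or.inl rfl))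
      -- endpoint property is preserved by γ
      have epres : ∀ w : Fin n, (∀ a b : Fin n, Rrel n a w → Rrel n b w → a = b) →
          (∀ a b : Fin n, Rrel n a (γ w) → Rrel n b (γ w) → a = b) := by
        intro w hw a b ha hb
        have ha' : a = γ (γ.symm a) := (γ.apply_symm_apply a).symm
        have hb' : b = γ (γ.symm b) := (γ.apply_symm_apply b).symm
        rw [ha'] at ha
        rw [hb'] at hb
        have hane : γ.symm a ≠ w := by
          intro h; rw [h] at ha; exact Rrel_irrefl n (γ w) ha
        have hbne : γ.symm b ≠ w := by
          intro h; rw [h] at hb; exact Rrel_irrefl n (γ w) hb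
        have := hw _ _ ((hR _ w hane).1 ha) ((hR _ w hbne).1 hb)
        rw [ha', hb', this]
      -- endpoints have value 0 or n-1
      have hE : ∀ v : Fin n, (∀ a b : Fin n, Rrel n a v → Rrel n b v → a = b) →
          (v.1 = 0 ∨ v.1 = n - 1) := by
        intro v h
        by_contra hcon
        push_neg at hcon
        have h1 : 1 ≤ v.1 := by omega
        have h2 : v.1 + 1 < n := by have := v.2; omega
        have heq := h ⟨v.1 - 1, by omega⟩ ⟨v.1 + 1, by omega⟩
          (Or.inl (by simp; omega)) (Or.inr (Or.inl rfl))
        have hvv : v.1 - 1 = v.1 + 1 := congrArg Fin.val heq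
        omega
      -- 0 and n-1 are endpoints
      have e0 : ∀ a b : Fin n, Rrel n a v0 → Rrel n b v0 → a = b := by
        intro a b ha hb
        unfold Rrel at ha hb
        rw [hv0] at ha hb
        exact Fin.ext (by omega)
      have el : ∀ a b : Fin n, Rrel n a vl → Rrel n b vl → a = b := by
        intro a b ha hb
        unfold Rrel at ha hb
        rw [hvl] at ha hb
        have := a.2; have := b.2
        exact Fin.ext (by omega)
      -- γ fixes 0
      have base0 : γ v0 = v0 := by
        rcases hE (γ v0) (epres v0 e0) with h | h
        · exact Fin.ext (by rw [h, hv0])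
        · exfalso
          have hr : Rrel n (γ v0) (γ v1) :=
            (hR v0 v1 (by simp [v0, v1, Fin.ext_iff])).2 (Or.inl rfl)
          unfold Rrel at hr
          have := (γ v1).2
          omega
      -- γ fixes n-1
      have basel : γ vl = vl := by
        rcases hE (γ vl) (epres vl el) with h | h
        · exfalso
          have : γ vl = γ v0 := by
            rw [base0]; exact Fin.ext (by rw [h, hv0])
          have := hinj this
          have := congrArg Fin.val this
          rw [hvl, hv0] at this
          omega
        · exact Fin.ext (by rw [h, hvl])
      -- γ fixes 1
      have base1 : γ v1 = v1 := by
        have hr : Rrel n (γ v0) (γ v1) :=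
          (hR v0 v1 (by simp [v0, v1, Fin.ext_iff])).2 (Or.inl rfl)
        rw [base0] at hr
        unfold Rrel at hr
        rw [hv0] at hr
        exact Fin.ext (by rw [hv1]; omega)
      -- γ fixes 3
      have base3 : γ v3 = v3 := by
        rcases hπ3 with h | h
        · exfalso
          have : γ v3 = γ v1 := by rw [base1]; exact Fin.ext (by rw [h, hv1])
          have := congrArg Fin.val (hinj this)
          rw [hv3, hv1] at this
          omega
        · exact Fin.ext (by rw [h, hv3])
      -- γ fixes 2
      have base2 : γ v2 = v2 := by
        have hr : Rrel n (γ v2) (γ v1) :=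
          (hR v2 v1 (by simp [v2, v1, Fin.ext_iff])).2 (Or.inr (Or.inl rfl))
        rw [base1] at hr
        unfold Rrel at hr
        rw [hv1] at hr
        have hne0 : (γ v2).1 ≠ 0 := by
          intro h
          have : γ v2 = γ v0 := by rw [base0]; exact Fin.ext (by rw [h, hv0])
          have := congrArg Fin.val (hinj this)
          rw [hv2, hv0] at this; omega
        have hne3 : (γ v2).1 ≠ 3 := by
          intro h
          have : γ v2 = γ v3 := by rw [base3]; exact Fin.ext (by rw [h, hv3])
          have := congrArg Fin.val (hinj this)
          rw [hv2, hv3] at this; omega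
        exact Fin.ext (by rw [hv2]; omega)
      -- by induction, γ fixes everything
      have fix : ∀ m : ℕ, ∀ v : Fin n, v.1 ≤ m → γ v = v := by
        intro m
        induction m with
        | zero =>
          intro v hv
          have : v = v0 := Fin.ext (by rw [hv0]; omega)
          rw [this]; exact base0
        | succ m ih =>
          intro v hv
          rcases Nat.lt_or_ge v.1 (m + 1) with h | h
          · exact ih v (by omega)
          · have hvm : v.1 = m + 1 := by omega
            rcases Nat.lt_or_ge m 3 with hm | hm
            · -- v.1 ∈ {1,2,3}
              interval_cases m
              · have : v = v1 := Fin.ext (by rw [hv1]; omega)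
                rw [this]; exact base1
              · have : v = v2 := Fin.ext (by rw [hv2]; omega)
                rw [this]; exact base2
              · have : v = v3 := Fin.ext (by rw [hv3]; omega)
                rw [this]; exact base3
            · -- induction step, v.1 = m+1 ≥ 4
              have hmn : m < n := by have := v.2; omega
              set u : Fin n := ⟨m, hmn⟩ with hu
              have hu1 : u.1 = m := rfl
              have hγu : γ u = u := ih u (by rw [hu1])
              have hne : v ≠ u := by
                intro h
                have := congrArg Fin.val h
                rw [hu1] at this
                omega
              have hr : Rrel n (γ v) (γ u) :=
                (hR v u hne).2 (Or.inr (Or.inl (by rw [hu1]; omega)))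
              rw [hγu] at hr
              unfold Rrel at hr
              rw [hu1] at hr
              -- cases on (γ v).1
              rcases hr with h1 | h2 | h3 | h4
              · -- (γ v).1 + 1 = m, so (γ v).1 ≤ m, contradiction via injectivity
                exfalso
                have hfix := ih (γ v) (by omega)
                have hw := hinj hfix
                have := congrArg Fin.val hw
                omega
              · exact Fin.ext (by omega)
              · exfalso
                have hfix := ih (γ v) (by omega)
                have hw := hinj hfix
                have := congrArg Fin.val hw
                omega
              · exfalso
                omega
      intro v
      exact fix n v (by omega)
  · -- no distinguishing 1-colouring
    rintro ⟨c, hc⟩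
    have h0 : (0 : ℕ) < n := by omega
    have h1 : (1 : ℕ) < n := by omega
    let a : Fin n := ⟨0, h0⟩
    let b : Fin n := ⟨1, h1⟩
    let γ : (⊤ : SimpleGraph (Fin n)) ≃g (⊤ : SimpleGraph (Fin n)) :=
      { toEquiv := Equiv.swap a b,
        map_rel_iff' := by
          intro u v
          simp [SimpleGraph.top_adj] }
    have hfix := hc γ (fun e => Subsingleton.elim _ _) a
    have : Equiv.swap a b a = a := hfix
    rw [Equiv.swap_apply_left] at this
    have := congrArg Fin.val this
    simp [a, b] at this
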